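/- Every P4-free graph (cograph) on at least 3 vertices is not prime, i.e., it has a homogeneous set. -/

import Mathlib

open Relation

section Aux

variable {V : Type*}

/-- Flat statement that `G` has no induced `P₄` on vertices `a-b-c-d`. -/
def NoP4 (G : SimpleGraph V) : Prop :=
  ∀ a b c d : V, a ≠ c → a ≠ d → b ≠ d →
    G.Adj a b → G.Adj b c → G.Adj c d →
    ¬ G.Adj a c → ¬ G.Adj b d → ¬ G.Adj a d → False

lemma noP4_of_free (G : SimpleGraph V)
    (hfree : IsEmpty (SimpleGraph.pathGraph 4 ↪g G)) : NoP4 G := by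
  intro a b c d hac had hbd hab hbc hcd nac nbd nad
  have hab' := hab.ne
  have hbc' := hbc.ne
  have hcd' := hcd.ne
  refine hfree.false ⟨⟨![a, b, c, d], ?_⟩, ?_⟩
  · intro i j hij
    fin_cases i <;> fin_cases j <;> simp_all
  · have nca : ¬ G.Adj c a := fun h => nac h.symm
    have ndb : ¬ G.Adj d b := fun h => nbd h.symm
    have nda : ¬ G.Adj d a := fun h => nad h.symm
    intro i j
    fin_cases i <;> fin_cases j <;>
      simp [SimpleGraph.pathGraph_adj, hab, hbc, hcd, hab.symm, hbc.symm, hcd.symm,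
        nac, nbd, nad, nca, ndb, nda, G.irrefl] <;>
      tauto

lemma noP4_compl {G : SimpleGraph V} (h : NoP4 G) : NoP4 Gᶜ := by
  intro a b c d hac had hbd hab hbc hcd nac nbd nad
  rw [SimpleGraph.compl_adj] at hab hbc hcd
  have eac : G.Adj a c := by
    by_contra h'; exact nac ⟨hac, h'⟩
  have ebd : G.Adj b d := by
    by_contra h'; exact nbd ⟨hbd, h'⟩
  have ead : G.Adj a d := by
    by_contra h'; exact nad ⟨had, h'⟩
  exact h c a d b hcd.1 (Ne.symm hbc.1) hab.1 eac.symm ead ebd.symm hcd.2 hab.2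
    (fun h' => hbc.2 h'.symm)

/-- All-pairs reachability, stated with `ReflTransGen`. -/
def Pre (G : SimpleGraph V) : Prop := ∀ u v : V, ReflTransGen G.Adj u v

/-- The key step: if `G` and `Gᶜ` are connected, `G` is `P₄`-free, and `G - v` is
disconnected (witnessed by `a`, `b`), we get a contradiction. -/
lemma seinsche_step (G : SimpleGraph V) (hno : NoP4 G)
    (hpre : Pre G) (hprec : Pre Gᶜ) (v a b : V) (ha : a ≠ v) (hb : b ≠ v)
    (hR : ¬ ReflTransGen (fun p q => p ≠ v ∧ q ≠ v ∧ G.Adj p q) a b) : False := by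
  set r : V → V → Prop := fun p q => p ≠ v ∧ q ≠ v ∧ G.Adj p q with hr
  have symmR : Symmetric (ReflTransGen r) :=
    by haveI : Std.Symm r := ⟨fun x y h => ⟨h.2.1, h.1, h.2.2.symm⟩⟩
       exact fun x y h => (ReflTransGen.symmetric (r := r)).symm x y h
  have hne : ∀ p q, ReflTransGen r p q → p ≠ v → q ≠ v := by
    intro p q h hp
    induction h with
    | refl => exact hp
    | tail _ hstep _ => exact hstep.2.1
  -- every vertex ≠ v is reached, within G - v, from a neighbor of v
  have reach : ∀ x, x ≠ v → ∃ y, y ≠ v ∧ G.Adj v y ∧ ReflTransGen r y x := by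
    have H : ∀ x, ReflTransGen G.Adj v x →
        x = v ∨ ∃ y, y ≠ v ∧ G.Adj v y ∧ ReflTransGen r y x := by
      intro x hx
      induction hx with
      | refl => exact Or.inl rfl
      | @tail c x hvc hcx ih =>
        by_cases hxv : x = v
        · exact Or.inl hxv
        · rcases ih with rfl | ⟨y, hy, hvy, hyc⟩
          · exact Or.inr ⟨x, hxv, hcx, ReflTransGen.refl⟩
          · exact Or.inr ⟨y, hy, hvy, hyc.tail ⟨hne y c hyc hy, hxv, hcx⟩⟩
    intro x hx
    rcases H x (hpre v x) with rfl | h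
    · exact absurd rfl hx
    · exact h
  -- on a path within G - v from a neighbor of v to a non-neighbor,
  -- there is a boundary edge
  have bound : ∀ y x, ReflTransGen r y x → G.Adj v y → ¬ G.Adj v x →
      ∃ p q, p ≠ v ∧ q ≠ v ∧ G.Adj p q ∧ G.Adj v p ∧ ¬ G.Adj v q := by
    intro y x hyx
    induction hyx with
    | refl => intro h1 h2; exact absurd h1 h2
    | @tail c x _ hcx ih =>
      intro hvy hvx
      by_cases hvc : G.Adj v c
      · exact ⟨c, x, hcx.1, hcx.2.1, hcx.2.2, hvc, hvx⟩
      · exact ih hvy hvc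
  by_cases hcomp : ∀ x, x ≠ v → G.Adj v x
  · -- v is complete to everything else, so Gᶜ is disconnected at v
    rcases (hprec v a).cases_head with heq | ⟨c, hc, -⟩
    · exact ha heq.symm
    · rw [SimpleGraph.compl_adj] at hc
      exact hc.2 (hcomp c (Ne.symm hc.1))
  · push_neg at hcomp
    obtain ⟨w, hwv, hvw⟩ := hcomp
    obtain ⟨y, hy, hvy, hyw⟩ := reach w hwv
    obtain ⟨p, q, hpv, hqv, hpq, hvp, hvq⟩ := bound y w hyw hvy hvw
    -- one of a, b is not connected to p within G - v
    have hz : ∃ z, z ≠ v ∧ ¬ ReflTransGen r z p := by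
      by_cases h1 : ReflTransGen r a p
      · exact ⟨b, hb, fun h2 => hR (h1.trans (symmR h2))⟩
      · exact ⟨a, ha, h1⟩
    obtain ⟨z, hzv, hzp⟩ := hz
    obtain ⟨y', hy', hvy', hy'z⟩ := reach z hzv
    have hy'p : ¬ ReflTransGen r y' p := fun h => hzp ((symmR hy'z).trans h)
    have hny'p : ¬ G.Adj y' p := fun h => hy'p (ReflTransGen.single ⟨hy', hpv, h⟩)
    have hny'q : ¬ G.Adj y' q := fun h =>
      hy'p ((ReflTransGen.single ⟨hy', hqv, h⟩).tail ⟨hqv, hpv, hpq.symm⟩)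
    have hy'ne_p : y' ≠ p := fun h => hy'p (h ▸ ReflTransGen.refl)
    have hy'ne_q : y' ≠ q := fun h =>
      hy'p (ReflTransGen.single ⟨hy', hpv, by rw [h]; exact hpq.symm⟩)
    exact hno y' v p q hy'ne_p hy'ne_q (Ne.symm hqv) hvy'.symm hvp hpq hny'p hvq hny'q

lemma lift_restrict (G : SimpleGraph V) (v : V) :
    ∀ (p q : V) (hp : p ≠ v)
      (_ : ReflTransGen (fun x y => x ≠ v ∧ y ≠ v ∧ G.Adj x y) p q) (hq : q ≠ v),
      ReflTransGen (G.comap ((↑) : {w // w ≠ v} → V)).Adj ⟨p, hp⟩ ⟨q, hq⟩ := by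
  intro p q hp h
  induction h with
  | refl => intro hq; exact ReflTransGen.refl
  | @tail c x _ hcx ih => intro hq; exact (ih hcx.1).tail hcx.2.2

lemma comap_compl (G : SimpleGraph V) (v : V) :
    (G.comap ((↑) : {w // w ≠ v} → V))ᶜ = Gᶜ.comap ((↑) : {w // w ≠ v} → V) := by
  ext a b
  simp only [SimpleGraph.compl_adj, SimpleGraph.comap_adj, ne_eq, Subtype.coe_ne_coe]

/-- Seinsche's theorem, contradiction form: a `P₄`-free graph on at least two
vertices cannot have both `G` and `Gᶜ` connected. -/
lemma seinsche : ∀ (n : ℕ) (V : Type u) [Fintype V] (G : SimpleGraph V),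
    Fintype.card V = n → 2 ≤ n → NoP4 G → Pre G → Pre Gᶜ → False := by
  intro n
  induction n using Nat.strong_induction_on with
  | _ n ih =>
  intro V _ G hcardV hn hno hpre hprec
  classical
  rcases Nat.lt_or_ge n 3 with h3 | h3
  · -- base case : n = 2
    have hn2 : Fintype.card V = 2 := by omega
    rw [← Nat.card_eq_fintype_card, Nat.card_eq_two_iff] at hn2
    obtain ⟨x, y, hxy, huniv⟩ := hn2
    have hmem : ∀ c : V, c = x ∨ c = y := by
      intro c
      have : c ∈ ({x, y} : Set V) := huniv ▸ Set.mem_univ c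
      simpa using this
    have hadj : G.Adj x y := by
      rcases (hpre x y).cases_head with heq | ⟨c, hc, -⟩
      · exact absurd heq hxy
      · rcases hmem c with rfl | rfl
        · exact absurd rfl hc.ne'
        · exact hc
    have hadjc : Gᶜ.Adj x y := by
      rcases (hprec x y).cases_head with heq | ⟨c, hc, -⟩
      · exact absurd heq hxy
      · rcases hmem c with rfl | rfl
        · exact absurd rfl hc.ne'
        · exact hc
    exact hadjc.2 hadj
  · -- inductive step: n ≥ 3
    have hpos : 0 < Fintype.card V := by omega
    obtain ⟨v⟩ := Fintype.card_pos_iff.mp hpos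
    set V' := {w : V // w ≠ v} with hV'
    set G' : SimpleGraph V' := G.comap ((↑) : V' → V) with hG'
    have hcard' : Fintype.card V' = n - 1 := by
      have h1 : Fintype.card {w : V // w = v} = 1 := Fintype.card_subtype_eq v
      have h2 := Fintype.card_subtype_compl (fun w : V => w = v)
      rw [h1, hcardV] at h2
      exact h2
    have hno' : NoP4 G' := by
      intro a b c d hac had hbd hab hbc hcd nac nbd nad
      exact hno a.1 b.1 c.1 d.1 (Subtype.coe_ne_coe.mpr hac) (Subtype.coe_ne_coe.mpr had)
        (Subtype.coe_ne_coe.mpr hbd) hab hbc hcd nac nbd nad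
    have hnotboth : ¬ (Pre G' ∧ Pre G'ᶜ) := by
      rintro ⟨h1, h2⟩
      exact ih (n - 1) (by omega) V' G' hcard' (by omega) hno' h1 h2
    rw [not_and_or] at hnotboth
    rcases hnotboth with hnp | hnp
    · -- G - v disconnected: use the step lemma for G
      rw [Pre] at hnp
      push_neg at hnp
      obtain ⟨a', b', hab'⟩ := hnp
      refine seinsche_step G hno hpre hprec v a'.1 b'.1 a'.2 b'.2 (fun h => hab' ?_)
      exact lift_restrict G v a'.1 b'.1 a'.2 h b'.2
    · -- Gᶜ - v disconnected: use the step lemma for Gᶜ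
      rw [Pre] at hnp
      push_neg at hnp
      obtain ⟨a', b', hab'⟩ := hnp
      refine seinsche_step Gᶜ (noP4_compl hno) hprec (by rw [compl_compl]; exact hpre)
        v a'.1 b'.1 a'.2 b'.2 (fun h => hab' ?_)
      have := lift_restrict Gᶜ v a'.1 b'.1 a'.2 h b'.2
      rwa [hG', comap_compl]

/-- From a disconnected graph with at least one edge, extract a component-style set. -/
lemma homog_of_not_pre [Fintype V] (G : SimpleGraph V)
    (hedge : ∃ a b, G.Adj a b) (hpre : ¬ Pre G) :
    ∃ X : Finset V, 2 ≤ X.card ∧ X.card < Fintype.card V ∧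
      ∀ z ∉ X, ∀ x ∈ X, ¬ G.Adj z x := by
  classical
  obtain ⟨a, b, hab⟩ := hedge
  rw [Pre] at hpre
  push_neg at hpre
  obtain ⟨u, w, huw⟩ := hpre
  have symmR : Symmetric (ReflTransGen G.Adj) :=
    by haveI : Std.Symm G.Adj := ⟨fun _ _ h => h.symm⟩
       exact fun x y h => (ReflTransGen.symmetric (r := G.Adj)).symm x y h
  set X : Finset V := Finset.univ.filter (fun x => ReflTransGen G.Adj a x) with hX
  have hmem : ∀ x, x ∈ X ↔ ReflTransGen G.Adj a x := by
    intro x; simp [hX]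
  refine ⟨X, ?_, ?_, ?_⟩
  · have hsub : ({a, b} : Finset V) ⊆ X := by
      intro x hx
      rcases Finset.mem_insert.mp hx with rfl | hx
      · exact (hmem x).mpr ReflTransGen.refl
      · rw [Finset.mem_singleton] at hx
        subst hx
        exact (hmem x).mpr (ReflTransGen.single hab)
    calc 2 = ({a, b} : Finset V).card := (Finset.card_pair hab.ne).symm
      _ ≤ X.card := Finset.card_le_card hsub
  · have hzout : ∃ z, z ∉ X := by
      by_contra h'
      push_neg at h'
      exact huw ((symmR ((hmem u).mp (h' u))).trans ((hmem w).mp (h' w)))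
    obtain ⟨z, hz⟩ := hzout
    rw [← Finset.card_univ]
    exact Finset.card_lt_card ⟨Finset.subset_univ X, fun h => hz (h (Finset.mem_univ z))⟩
  · intro z hz x hx hzx
    exact hz ((hmem z).mpr (((hmem x).mp hx).tail hzx.symm))

end Aux

/-- A homogeneous set of a finite simple graph: a set `X` of vertices with
`2 ≤ |X| < |V|` such that every vertex outside `X` is complete or anticomplete to `X`. -/
def IsHomogeneousSet {V : Type*} [Fintype V] (G : SimpleGraph V) (X : Finset V) : Prop :=
  2 ≤ X.card ∧ X.card < Fintype.card V ∧
    ∀ v ∉ X, (∀ x ∈ X, G.Adj v x) ∨ (∀ x ∈ X, ¬ G.Adj v x)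

/-- A graph is prime if it has no homogeneous set. -/
def IsPrimeGraph {V : Type*} [Fintype V] (G : SimpleGraph V) : Prop :=
  ¬ ∃ X : Finset V, IsHomogeneousSet G X

/-- Every `P₄`-free graph on at least 3 vertices has a homogeneous set. -/
theorem cograph_not_prime {V : Type*} [Fintype V] (G : SimpleGraph V)
    (hcard : 3 ≤ Fintype.card V)
    (hfree : IsEmpty (SimpleGraph.pathGraph 4 ↪g G)) :
    ∃ X : Finset V, IsHomogeneousSet G X := by
  classical
  have hno : NoP4 G := noP4_of_free G hfree
  obtain ⟨x, y, hxy⟩ := Fintype.exists_pair_of_one_lt_card (α := V) (by omega)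
  by_cases hE : ∃ a b, G.Adj a b
  · by_cases hN : ∃ a b, Gᶜ.Adj a b
    · by_cases hpre : Pre G
      · by_cases hprec : Pre Gᶜ
        · have h2n : (2:ℕ) ≤ Fintype.card V := by omega
          exact (seinsche (Fintype.card V) V G rfl h2n hno hpre hprec).elim
        · obtain ⟨X, h1, h2, h3⟩ := homog_of_not_pre Gᶜ hN hprec
          refine ⟨X, h1, h2, fun z hz => Or.inl fun x hx => ?_⟩
          have hne : z ≠ x := fun h => hz (h ▸ hx)
          have := h3 z hz x hx
          rw [SimpleGraph.compl_adj] at this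
          push_neg at this
          exact this hne
      · obtain ⟨X, h1, h2, h3⟩ := homog_of_not_pre G hE hpre
        exact ⟨X, h1, h2, fun z hz => Or.inr (h3 z hz)⟩
    · -- G is complete
      push_neg at hN
      refine ⟨{x, y}, ?_, ?_, ?_⟩
      · rw [Finset.card_pair hxy]
      · rw [Finset.card_pair hxy]; omega
      · intro z hz
        left
        intro c hc
        have hne : z ≠ c := fun h => hz (h ▸ hc)
        have := hN z c
        rw [SimpleGraph.compl_adj] at this
        push_neg at this
        exact this hne
  · -- G is edgeless
    push_neg at hE
    refine ⟨{x, y}, ?_, ?_, fun z _ => Or.inr fun c _ => hE z c⟩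
    · rw [Finset.card_pair hxy]
    · rw [Finset.card_pair hxy]; omega
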